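/- Under dichotomous valuations, if Y = (Y_1, ..., Y_n) is an envy-freeable partial allocation, g is an unallocated good, and agent x satisfies v_x(Y_x ∪ {g}) − v_x(Y_x) = 1, then the allocation obtained from Y by adding g to bundle Y_x is also envy-freeable. -/
import Mathlib


/-- Under dichotomous valuations, if `Y` is an envy-freeable partial
allocation (it maximizes social welfare over all reassignments of its bundles),
`g` is an unallocated good, and agent `x` has marginal value `1` for `g` relative
to `Y x`, then the allocation obtained by adding `g` to `Y x` is envy-freeable. -/
theorem add_good_preserves_envy_freeability {n m : ℕ}
    (v : Fin n → Finset (Fin m) → ℝ)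
    (hempty : ∀ i, v i ∅ = 0)
    (hdich : ∀ i (S : Finset (Fin m)) (g : Fin m),
        v i (insert g S) - v i S = 0 ∨ v i (insert g S) - v i S = 1)
    (Y : Fin n → Finset (Fin m))
    (hdisj : ∀ i j, i ≠ j → Disjoint (Y i) (Y j))
    (hYfreeable : ∀ τ : Equiv.Perm (Fin n),
        ∑ i, v i (Y (τ i)) ≤ ∑ i, v i (Y i))
    (g : Fin m) (hg : ∀ i, g ∉ Y i)
    (x : Fin n) (hx : v x (insert g (Y x)) - v x (Y x) = 1) :
    ∀ τ : Equiv.Perm (Fin n),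
      ∑ i, v i (Function.update Y x (insert g (Y x)) (τ i)) ≤
        ∑ i, v i (Function.update Y x (insert g (Y x)) i) := by
  intro τ
  set Y' := Function.update Y x (insert g (Y x)) with hY'
  have hY'x : Y' x = insert g (Y x) := Function.update_self _ _ _
  have hY'ne : ∀ j, j ≠ x → Y' j = Y j := fun j hj => Function.update_of_ne hj _ _
  have hrhs : ∑ i, v i (Y' i) = ∑ i, v i (Y i) + 1 := by
    have h1 : ∀ i, v i (Y' i) = v i (Y i) + (if i = x then 1 else 0) := by
      intro i
      by_cases h : i = x
      · subst h; rw [hY'x]; simp; linarith [hx]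
      · rw [hY'ne _ h]; simp [h]
    rw [Finset.sum_congr rfl (fun i _ => h1 i), Finset.sum_add_distrib]
    simp
  have hlhs : ∑ i, v i (Y' (τ i)) ≤ ∑ i, v i (Y (τ i)) + 1 := by
    have hb : ∀ i, v i (Y' (τ i)) ≤ v i (Y (τ i)) + (if τ i = x then 1 else 0) := by
      intro i
      by_cases h : τ i = x
      · rw [h, hY'x]
        rcases hdich i (Y x) g with h0 | h1 <;> simp [h] <;> linarith
      · rw [hY'ne _ h]; simp [h]
    calc ∑ i, v i (Y' (τ i)) ≤ ∑ i, (v i (Y (τ i)) + if τ i = x then 1 else 0) :=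
          Finset.sum_le_sum (fun i _ => hb i)
      _ = ∑ i, v i (Y (τ i)) + ∑ i, (if τ i = x then (1:ℝ) else 0) :=
          Finset.sum_add_distrib
      _ = ∑ i, v i (Y (τ i)) + 1 := by
          congr 1
          simp_rw [Equiv.apply_eq_iff_eq_symm_apply]
          simp
  linarith [hYfreeable τ]
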